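/- For n → ∞, set N_n = 4(n−1) and let T_n = N_n·( (2(n−1)−1)(√(4/3) + √(8/3)) + 2 ) be the sum of distances of the spherical code obtained from the maximal family of 2(n−1) equiangular lines in ℝ^n with common inner product 1/3. Then the ratio T_n / τ₃(n, N_n) converges to 1/(√6·(√2 − 1)), where τ₃(n, N) = N·√( 2N(n·A₁ + 2(N−n−1)²·B₁) / (n²(n−1)² + 4n(N−n−1)(N−2n)) ), with A₁ = N n³ + (2N−1)n² − (N−1)(7N−2)n + (N−1)²(2N+3) and B₁ = √(n(n−1)N(N−n−1)). -/
import Mathlib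


open Filter

/-- `A₁ = N n³ + (2N−1)n² − (N−1)(7N−2)n + (N−1)²(2N+3)`. -/
noncomputable def A₁ (n N : ℝ) : ℝ :=
  N * n ^ 3 + (2 * N - 1) * n ^ 2 - (N - 1) * (7 * N - 2) * n + (N - 1) ^ 2 * (2 * N + 3)

/-- `B₁ = √(n(n−1)N(N−n−1))`. -/
noncomputable def B₁ (n N : ℝ) : ℝ :=
  Real.sqrt (n * (n - 1) * N * (N - n - 1))

/-- The degree-3 universal upper bound
`τ₃(n, N) = N·√( 2N(n·A₁ + 2(N−n−1)²·B₁) / (n²(n−1)² + 4n(N−n−1)(N−2n)) )`. -/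
noncomputable def tau3 (n N : ℕ) : ℝ :=
  (N : ℝ) * Real.sqrt
    (2 * N * ((n : ℝ) * A₁ n N + 2 * ((N : ℝ) - n - 1) ^ 2 * B₁ n N)
      / ((n : ℝ) ^ 2 * ((n : ℝ) - 1) ^ 2 + 4 * n * ((N : ℝ) - n - 1) * ((N : ℝ) - 2 * n)))

/-- The sum of distances `T_n` of the spherical code obtained from the maximal family of
`2(n−1)` equiangular lines in `ℝⁿ` with common inner product `1/3` (here `N_n = 4(n−1)`). -/
noncomputable def Tlines (n : ℕ) : ℝ :=
  (4 * ((n : ℝ) - 1)) *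
    ((2 * ((n : ℝ) - 1) - 1) * (Real.sqrt (4 / 3) + Real.sqrt (8 / 3)) + 2)

/-- Rescaled radicand of `B₁` in terms of `u = 1/n`. -/
noncomputable def rfun (u : ℝ) : ℝ := (1-u)*(4-4*u)*(3-5*u)

/-- Rescaled `A₁` in terms of `u = 1/n`. -/
noncomputable def pa (u : ℝ) : ℝ :=
  (4-4*u) + (8*u-9*u^2) - u*(4-5*u)*(28-30*u) + u*(4-5*u)^2*(8-5*u)

/-- Rescaled denominator in terms of `u = 1/n`. -/
noncomputable def pd (u : ℝ) : ℝ := (1-u)^2 + 4*u*(3-5*u)*(2-4*u)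

/-- Rescaled radicand of `τ₃` in terms of `u = 1/n`. -/
noncomputable def Hfun (u : ℝ) : ℝ :=
  (8-8*u)*(pa u + 2*u*(3-5*u)^2 * Real.sqrt (rfun u)) / pd u

/-- The ratio as a function of `u = 1/n`. -/
noncomputable def g (u : ℝ) : ℝ :=
  (4*(1-u)*((2-3*u)*(Real.sqrt (4/3)+Real.sqrt (8/3)) + 2*u))
    / ((4-4*u) * Real.sqrt (Hfun u))

lemma hH0 : Hfun 0 = 32 := by
  unfold Hfun pa pd; norm_num

lemma g0 : g 0 = 1/(Real.sqrt 6 * (Real.sqrt 2 - 1)) := by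
  have ha : Real.sqrt 2 ^ 2 = 2 := Real.sq_sqrt (by norm_num)
  have hb : Real.sqrt 3 ^ 2 = 3 := Real.sq_sqrt (by norm_num)
  have ha0 : 0 < Real.sqrt 2 := Real.sqrt_pos.mpr (by norm_num)
  have hb0 : 0 < Real.sqrt 3 := Real.sqrt_pos.mpr (by norm_num)
  have ha1 : 1 < Real.sqrt 2 := by nlinarith
  have h43 : Real.sqrt (4/3) = 2 / Real.sqrt 3 := by
    rw [show (4:ℝ)/3 = (2/Real.sqrt 3)^2 from by rw [div_pow, hb]; norm_num]
    exact Real.sqrt_sq (by positivity)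
  have h83 : Real.sqrt (8/3) = 2*Real.sqrt 2 / Real.sqrt 3 := by
    rw [show (8:ℝ)/3 = (2*Real.sqrt 2/Real.sqrt 3)^2 from by
      rw [div_pow, mul_pow, ha, hb]; norm_num]
    exact Real.sqrt_sq (by positivity)
  have h32 : Real.sqrt 32 = 4*Real.sqrt 2 := by
    rw [show (32:ℝ) = (4*Real.sqrt 2)^2 from by rw [mul_pow, ha]; norm_num]
    exact Real.sqrt_sq (by positivity)
  have h6 : Real.sqrt 6 = Real.sqrt 2 * Real.sqrt 3 := by
    rw [show (6:ℝ) = (Real.sqrt 2 * Real.sqrt 3)^2 from by rw [mul_pow, ha, hb]; norm_num]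
    exact Real.sqrt_sq (by positivity)
  unfold g
  rw [hH0, h43, h83, h32, h6]
  have hs1 : Real.sqrt 2 - 1 ≠ 0 := by linarith
  field_simp
  ring_nf
  nlinarith [ha, hb, mul_pos ha0 hb0]

lemma hgc : ContinuousAt g 0 := by
  have hr : Continuous rfun := by unfold rfun; fun_prop
  have hpa : Continuous pa := by unfold pa; fun_prop
  have hpd : Continuous pd := by unfold pd; fun_prop
  have hsq : Continuous (fun u => Real.sqrt (rfun u)) := Real.continuous_sqrt.comp hr
  have hHc : ContinuousAt Hfun 0 := by
    unfold Hfun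
    apply ContinuousAt.div
    · exact (ContinuousAt.mul (by fun_prop) (ContinuousAt.add hpa.continuousAt
        (ContinuousAt.mul (by fun_prop) hsq.continuousAt)))
    · exact hpd.continuousAt
    · simp [pd]
  unfold g
  apply ContinuousAt.div
  · fun_prop
  · exact ContinuousAt.mul (by fun_prop) (Real.continuous_sqrt.continuousAt.comp hHc)
  · have h32 : (0:ℝ) < Real.sqrt (Hfun 0) := by
      rw [hH0]; exact Real.sqrt_pos.mpr (by norm_num)
    have : (4 - 4*(0:ℝ)) * Real.sqrt (Hfun 0) > 0 := by nlinarith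
    exact ne_of_gt this

lemma ratio_eq (n : ℕ) (hn : 2 ≤ n) :
    Tlines n / tau3 n (4 * (n - 1)) = g (1/(n:ℝ)) := by
  have h1n : 1 ≤ n := by omega
  have hx2' : (2:ℝ) ≤ (n:ℝ) := by exact_mod_cast hn
  set x : ℝ := (n : ℝ) with hxdef
  have hx2 : (2:ℝ) ≤ x := hx2'
  have hx0 : x ≠ 0 := by linarith
  have hx1 : x - 1 ≠ 0 := by intro h; nlinarith
  have hN : ((4*(n-1) : ℕ) : ℝ) = 4*(x-1) := by
    push_cast [h1n]; ring
  have hA : A₁ x (4*(x-1)) = x^4 * pa (1/x) := by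
    unfold A₁ pa; field_simp; ring
  have hB : B₁ x (4*(x-1)) = x^2 * Real.sqrt (rfun (1/x)) := by
    unfold B₁ rfun
    rw [show x*(x-1)*(4*(x-1))*(4*(x-1)-x-1)
        = x^4 * ((1-1/x)*(4-4*(1/x))*(3-5*(1/x))) from by field_simp; ring,
      Real.sqrt_mul (by positivity : (0:ℝ) ≤ x^4)]
    congr 1
    rw [show x^4 = (x^2)^2 from by ring, Real.sqrt_sq (by positivity)]
  have hu1 : 0 < 1/x := by positivity
  have hu2 : 1/x ≤ 1/2 := by
    rw [div_le_div_iff₀ (by linarith) (by norm_num)]; linarith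
  have hpd : 0 < pd (1/x) := by
    unfold pd
    have h3 : (0:ℝ) ≤ 3 - 5*(1/x) := by linarith
    have h4 : (0:ℝ) ≤ 2 - 4*(1/x) := by linarith
    have h5 : (0:ℝ) ≤ 4*(1/x)*(3-5*(1/x))*(2-4*(1/x)) :=
      mul_nonneg (mul_nonneg (by linarith) h3) h4
    nlinarith [h5]
  have hD : x^2*(x-1)^2 + 4*x*(4*(x-1)-x-1)*(4*(x-1)-2*x) = x^4 * pd (1/x) := by
    unfold pd; field_simp; ring
  have htau : tau3 n (4*(n-1))
      = 4*(x-1) * (x * Real.sqrt (Hfun (1/x))) := by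
    unfold tau3
    rw [hN, ← hxdef, hA, hB]
    rw [show 2*(4*(x-1))*(x*(x^4 * pa (1/x)) + 2*(4*(x-1)-x-1)^2*(x^2 * Real.sqrt (rfun (1/x))))
        / (x^2*(x-1)^2 + 4*x*(4*(x-1)-x-1)*(4*(x-1)-2*x))
        = x^2 * Hfun (1/x) from by
      rw [hD]; unfold Hfun
      field_simp
      ring]
    rw [Real.sqrt_mul (by positivity : (0:ℝ) ≤ x^2), Real.sqrt_sq (by linarith)]
  rw [htau]
  unfold Tlines g
  rw [← hxdef]
  set c := Real.sqrt (4/3) + Real.sqrt (8/3) with hc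
  set s := Real.sqrt (Hfun (1/x)) with hsdef
  by_cases hs : s = 0
  · simp [hs]
  · have hspos : 0 < s := lt_of_le_of_ne (Real.sqrt_nonneg _) (Ne.symm hs)
    have hx1' : (0:ℝ) < x - 1 := by linarith
    have h44 : (0:ℝ) < 4 - 4*(1/x) := by
      have : 1/x ≤ 1/2 := hu2
      linarith
    rw [div_eq_div_iff (by positivity) (by positivity)]
    field_simp
    ring

/-- The ratio of the sum of distances of the `s = 1/3` equiangular-lines codes to the
degree-3 upper bound converges to `1/(√6·(√2 − 1))`. -/
theorem equiangular_third_ratio :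
    Tendsto (fun n : ℕ => Tlines n / tau3 n (4 * (n - 1))) atTop
      (nhds (1 / (Real.sqrt 6 * (Real.sqrt 2 - 1)))) := by
  have key : Tendsto (fun n : ℕ => g (1/(n:ℝ))) atTop (nhds (g 0)) :=
    hgc.tendsto.comp tendsto_one_div_atTop_nhds_zero_nat
  rw [← g0]
  refine Tendsto.congr' ?_ key
  filter_upwards [eventually_ge_atTop 2] with n hn
  exact (ratio_eq n hn).symm
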